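/- The word 1213121 over the alphabet {1,2,3} is rich and square-free, and it is a longest rich square-free word over a 3-letter alphabet, i.e., every rich square-free word over a 3-letter alphabet has length at most 7. -/

import Mathlib

set_option linter.unusedSectionVars false

/-- A word is a palindrome if it equals its reversal. -/
def Palindromic {α : Type*} (w : List α) : Prop := w.reverse = w

/-- A finite word is rich if it has exactly |w|+1 distinct palindromic factors
(including the empty word). -/
def Rich {α : Type*} (w : List α) : Prop :=
  {p : List α | p <:+: w ∧ Palindromic p}.ncard = w.length + 1

/-- A word is square-free if it has no factor of the form `u ++ u` with `u` nonempty. -/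
def SqFree {α : Type*} (w : List α) : Prop :=
  ∀ u : List α, u ≠ [] → ¬ (u ++ u) <:+: w

section Aux

variable {α : Type*} [DecidableEq α]

/-- The list of all infixes of a word. -/
def infixesL (w : List α) : List (List α) := w.tails.flatMap List.inits

theorem mem_infixesL {p w : List α} : p ∈ infixesL w ↔ p <:+: w := by
  simp only [infixesL, List.mem_flatMap, List.mem_tails, List.mem_inits,
    List.infix_iff_prefix_suffix]
  tauto

/-- The finite set of palindromic factors of a word. -/
def palSet (w : List α) : Finset (List α) :=
  ((infixesL w).filter (fun p => p.reverse = p)).toFinset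

theorem mem_palSet {p w : List α} : p ∈ palSet w ↔ p <:+: w ∧ Palindromic p := by
  simp [palSet, mem_infixesL, Palindromic]

theorem rich_iff {w : List α} : Rich w ↔ (palSet w).card = w.length + 1 := by
  unfold Rich
  have h : {p : List α | p <:+: w ∧ Palindromic p} = ↑(palSet w) := by
    ext p; simp [mem_palSet]
  rw [h, Set.ncard_coe_finset]

theorem sqfree_iff {w : List α} :
    SqFree w ↔ ∀ u ∈ infixesL w, u ≠ [] → ¬ (u ++ u) <:+: w := by
  constructor
  · exact fun h u _ => h u
  · intro h u hu hinf
    exact h u (mem_infixesL.2 ((u.prefix_append u).isInfix.trans hinf)) hu hinf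

instance (w : List α) : Decidable (SqFree w) := decidable_of_iff' _ sqfree_iff
instance (w : List α) : Decidable (Rich w) := decidable_of_iff' _ rich_iff

/-- Boolean square-freeness test. -/
def sqB (w : List α) : Bool :=
  (infixesL w).all (fun f => f.isEmpty || !(f.take (f.length/2) ++ f.take (f.length/2) == f))

theorem sqB_mono {t e : List α} (h : sqB (t ++ e) = true) : sqB t = true := by
  rw [sqB, List.all_eq_true] at *
  intro f hf
  exact h f (mem_infixesL.2 ((mem_infixesL.1 hf).trans (t.prefix_append e).isInfix))

theorem sqB_iff {w : List α} : sqB w = true ↔ SqFree w := by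
  rw [sqB, List.all_eq_true]
  constructor
  · intro h u hu hinf
    have hf := h (u ++ u) (mem_infixesL.2 hinf)
    have hl : (u ++ u).length / 2 = u.length := by
      simp only [List.length_append]; omega
    rw [hl, List.take_left] at hf
    simp [List.isEmpty_iff, hu] at hf
  · intro h f hf
    have key : ¬(f.take (f.length/2) ++ f.take (f.length/2) = f) ∨ f = [] := by
      by_cases hfe : f = []
      · exact Or.inr hfe
      · left
        intro he
        have hne : f.take (f.length/2) ≠ [] := by
          intro h0
          rw [h0] at he
          exact hfe he.symm
        refine h _ hne ?_
        rw [he]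
        exact mem_infixesL.1 hf
    rcases key with key | key
    · simp [key]
    · simp [key]

theorem palSet_concat_card (w : List α) (a : α) :
    (palSet (w ++ [a])).card ≤ (palSet w).card + 1 := by
  classical
  set S := palSet (w ++ [a]) \ palSet w with hSdef
  have hsub : palSet (w ++ [a]) ⊆ palSet w ∪ S := by
    intro p hp
    by_cases h : p ∈ palSet w
    · exact Finset.mem_union_left _ h
    · exact Finset.mem_union_right _ (Finset.mem_sdiff.2 ⟨hp, h⟩)
  have hmem : ∀ p ∈ S, (p <:+ w ++ [a] ∧ Palindromic p ∧ ¬ p <:+: w) := by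
    intro p hp
    rw [hSdef, Finset.mem_sdiff, mem_palSet, mem_palSet] at hp
    obtain ⟨⟨hinf, hpal⟩, hnot⟩ := hp
    have hnw : ¬ p <:+: w := fun h => hnot ⟨h, hpal⟩
    rcases List.infix_concat_iff.1 hinf with h | h
    · exact ⟨h, hpal, hnw⟩
    · exact absurd h hnw
  have hkey : ∀ p ∈ S, ∀ q ∈ S, p.length ≤ q.length → p = q := by
    intro p hp q hq hlen
    obtain ⟨hps, hppal, hpnw⟩ := hmem p hp
    obtain ⟨hqs, hqpal, _⟩ := hmem q hq
    have hpq : p <:+ q := List.suffix_of_suffix_length_le hps hqs hlen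
    have hpre : p <+: q := by
      have := hpq.reverse
      rwa [hppal, hqpal] at this
    by_contra hne
    obtain ⟨t, ht⟩ := hpre
    have htne : t ≠ [] := by
      intro h0; rw [h0, List.append_nil] at ht; exact hne ht
    obtain rfl | ⟨t', b, rfl⟩ := t.eq_nil_or_concat
    · exact htne rfl
    obtain ⟨s, hs⟩ := hqs
    rw [← ht] at hs
    have hs' : (s ++ p ++ t') ++ [b] = w ++ [a] := by
      rw [← hs]; simp
    have hw : s ++ p ++ t' = w := by
      have := congrArg List.dropLast hs'
      simpa using this
    exact hpnw ⟨s, t', hw⟩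
  have hone : S.card ≤ 1 := by
    rw [Finset.card_le_one]
    intro p hp q hq
    rcases le_total p.length q.length with h | h
    · exact hkey p hp q hq h
    · exact (hkey q hq p hp h).symm
  calc (palSet (w ++ [a])).card ≤ (palSet w ∪ S).card := Finset.card_le_card hsub
    _ ≤ (palSet w).card + S.card := Finset.card_union_le _ _
    _ ≤ (palSet w).card + 1 := by omega

theorem palSet_append_card (u t : List α) :
    (palSet (u ++ t)).card ≤ (palSet u).card + t.length := by
  induction t using List.reverseRecOn with
  | nil => simp
  | append_singleton t a ih =>
    calc (palSet (u ++ (t ++ [a]))).card = (palSet ((u ++ t) ++ [a])).card := by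
          rw [List.append_assoc]
      _ ≤ (palSet (u ++ t)).card + 1 := palSet_concat_card _ _
      _ ≤ (palSet u).card + (t ++ [a]).length := by
          simp only [List.length_append, List.length_cons, List.length_nil]
          omega

theorem map_injOn_eq {β : Type*} {f : α → β} {s : Set α} (hf : Set.InjOn f s) :
    ∀ p q : List α, (∀ x ∈ p, x ∈ s) → (∀ x ∈ q, x ∈ s) → p.map f = q.map f → p = q := by
  intro p
  induction p with
  | nil => intro q _ _ h; cases q <;> simp_all
  | cons a p ih =>
    intro q hp hq h
    cases q with
    | nil => simp at h
    | cons b q =>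
      simp only [List.map_cons, List.cons.injEq] at h
      have hab : a = b := hf (hp a (by simp)) (hq b (by simp)) h.1
      have := ih q (fun x hx => hp x (by simp [hx])) (fun x hx => hq x (by simp [hx])) h.2
      rw [hab, this]

theorem palSet_card_le_map {β : Type*} [DecidableEq β] {f : α → β} {w : List α}
    (hf : Set.InjOn f {x | x ∈ w}) :
    (palSet w).card ≤ (palSet (w.map f)).card := by
  apply Finset.card_le_card_of_injOn (fun p => p.map f)
  · intro p hp
    obtain ⟨hinf, hpal⟩ := mem_palSet.1 hp
    refine mem_palSet.2 ⟨hinf.map f, ?_⟩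
    rw [Palindromic, ← List.map_reverse, hpal]
  · intro p hp q hq h
    obtain ⟨hinf, _⟩ := mem_palSet.1 (by exact hp)
    obtain ⟨hinf', _⟩ := mem_palSet.1 (by exact hq)
    exact map_injOn_eq hf p q (fun x hx => hinf.subset hx) (fun x hx => hinf'.subset hx) h

theorem sqfree_map {β : Type*} {f : α → β} {w : List α}
    (hf : Set.InjOn f {x | x ∈ w}) (h : SqFree w) : SqFree (w.map f) := by
  intro u hu hinf
  obtain ⟨p, hpw, hpe⟩ := List.infix_map_iff.1 hinf
  have h1 : (p.take u.length).map f = u := by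
    have h' := congrArg (List.take u.length) hpe
    rw [List.take_left] at h'
    rw [List.map_take, ← h']
  have h2 : (p.drop u.length).map f = u := by
    have h' := congrArg (List.drop u.length) hpe
    rw [List.drop_left] at h'
    rw [List.map_drop, ← h']
  have hsub : ∀ x ∈ p, x ∈ w := fun x hx => hpw.subset hx
  have heq : p.take u.length = p.drop u.length := by
    apply map_injOn_eq hf
    · exact fun x hx => hsub x (List.mem_of_mem_take hx)
    · exact fun x hx => hsub x (List.mem_of_mem_drop hx)
    · rw [h1, h2]
  have hpne : p.take u.length ≠ [] := by
    intro h0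
    rw [h0] at h1
    exact hu h1.symm
  apply h (p.take u.length) hpne
  have : p.take u.length ++ p.take u.length = p := by
    conv_rhs => rw [← p.take_append_drop u.length]
    rw [← heq]
  rw [this]
  exact hpw

end Aux

/-- The check that a word over `Fin 3` is not both square-free and rich (for length-8 words). -/
def good (w : List (Fin 3)) : Bool := cond (sqB w) (decide ((palSet w).card ≤ 8)) true

/-- Tree-structured enumeration of all extensions, pruning non-square-free prefixes. -/
def chk : ℕ → List (Fin 3) → Bool
  | 0, t => good t
  | n+1, t => cond (sqB t) (chk n (t ++ [0]) && chk n (t ++ [1]) && chk n (t ++ [2])) true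

theorem chk_sound : ∀ n t, chk n t = true →
    ∀ e : List (Fin 3), e.length = n → good (t ++ e) = true := by
  intro n
  induction n with
  | zero => intro t h e he; rw [List.length_eq_zero_iff.1 he, List.append_nil]; exact h
  | succ n ih =>
    intro t h e he
    match e with
    | a :: e' =>
      by_cases hs : sqB t = true
      case neg =>
        have hfalse : sqB (t ++ a :: e') = false := by
          cases hgood : sqB (t ++ a :: e')
          · rfl
          · exact absurd (sqB_mono hgood) hs
        simp [good, hfalse]
      simp only [chk, hs, cond_true, Bool.and_eq_true] at h
      have he' : e'.length = n := by simpa using he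
      have hta : t ++ a :: e' = (t ++ [a]) ++ e' := by simp
      rw [hta]
      fin_cases a
      · exact ih _ h.1.1 e' he'
      · exact ih _ h.1.2 e' he'
      · exact ih _ h.2 e' he'

set_option maxRecDepth 100000 in
set_option maxHeartbeats 4000000 in
theorem bigcheck : chk 8 [] = true := by decide

theorem exists_inj_fin3 (s : Finset ℕ) (h : s.card ≤ 3) :
    ∃ f : ℕ → Fin 3, Set.InjOn f ↑s := by
  let e := s.equivFin
  refine ⟨fun x => if hx : x ∈ s then Fin.castLE h (e ⟨x, hx⟩) else 0, ?_⟩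
  intro a ha b hb hab
  rw [Finset.mem_coe] at ha hb
  simp only [dif_pos ha, dif_pos hb] at hab
  have := e.injective (Fin.castLE_injective h hab)
  exact congrArg Subtype.val this

theorem longest_rich_squarefree_three_letters :
    Rich ([1, 2, 1, 3, 1, 2, 1] : List ℕ) ∧ SqFree ([1, 2, 1, 3, 1, 2, 1] : List ℕ) ∧
    ∀ v : List ℕ, Rich v → SqFree v → v.toFinset.card ≤ 3 → v.length ≤ 7 := by
  refine ⟨by decide, by decide, ?_⟩
  intro v hR hS hcard
  by_contra hlen
  push_neg at hlen
  set w := v.take 8 with hwdef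
  have hw8 : w.length = 8 := by rw [hwdef, List.length_take]; omega
  have hwinf : w <:+: v := (List.take_prefix _ _).isInfix
  have hwS : SqFree w := fun u hu h => hS u hu (h.trans hwinf)
  have h1 : (palSet v).card = v.length + 1 := rich_iff.1 hR
  have h2 : (palSet v).card ≤ (palSet w).card + (v.length - 8) := by
    have hv : v = w ++ v.drop 8 := (List.take_append_drop 8 v).symm
    calc (palSet v).card = (palSet (w ++ v.drop 8)).card := by rw [← hv]
      _ ≤ (palSet w).card + (v.drop 8).length := palSet_append_card _ _
      _ = (palSet w).card + (v.length - 8) := by rw [List.length_drop]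
  have h9 : 9 ≤ (palSet w).card := by omega
  obtain ⟨f, hf⟩ := exists_inj_fin3 v.toFinset hcard
  have hfw : Set.InjOn f {x | x ∈ w} := by
    apply hf.mono
    intro x hx
    rw [Set.mem_setOf_eq] at hx
    rw [Finset.mem_coe, List.mem_toFinset]
    exact hwinf.subset hx
  have hcard2 : (palSet w).card ≤ (palSet (w.map f)).card := palSet_card_le_map hfw
  have hS' : SqFree (w.map f) := sqfree_map hfw hwS
  have hlen' : (w.map f).length = 8 := by simp [hw8]
  have hgood := chk_sound 8 [] bigcheck (w.map f) hlen'
  rw [List.nil_append] at hgood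
  have hsqB : sqB (w.map f) = true := sqB_iff.2 hS'
  rw [good, hsqB, cond_true, decide_eq_true_iff] at hgood
  omega
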